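/- Equality λ(G) = √m holds for a triangle-free graph G with m ≥ 1 edges if and only if G is a complete bipartite graph together with possibly some isolated vertices. -/

import Mathlib

open scoped Matrix

open Classical in
noncomputable def adjMat {V : Type*} [Fintype V] (G : SimpleGraph V) : Matrix V V ℝ :=
  Matrix.of fun i j => if G.Adj i j then 1 else 0

theorem adjMat_isHermitian {V : Type*} [Fintype V] (G : SimpleGraph V) :
    (adjMat G).IsHermitian := by
  ext i j
  simp only [adjMat, Matrix.conjTranspose_apply, Matrix.of_apply, starRingEnd_apply]
  rw [G.adj_comm]
  simp

/-- Spectral radius: the largest adjacency eigenvalue. -/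
noncomputable def specRad {V : Type*} [Fintype V] [DecidableEq V] (G : SimpleGraph V) : ℝ :=
  ⨆ i, (adjMat_isHermitian G).eigenvalues i

/-- `G` contains a cycle of length `ℓ`. -/
def hasCycle {V : Type*} (G : SimpleGraph V) (ℓ : ℕ) : Prop :=
  ∃ (v : V) (w : G.Walk v v), w.IsCycle ∧ w.length = ℓ

lemma adjMat_nonneg {V : Type*} [Fintype V] (G : SimpleGraph V) (i j : V) :
    0 ≤ adjMat G i j := by
  simp only [adjMat, Matrix.of_apply]; split <;> norm_num

/-- Nosal's counting argument: given a nonnegative "eigen-inequality" vector `y` with maximum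
at `u`, we get `λ² y_u ≤ m y_u`, and in the equality case every edge decomposes through a
neighbour of `u`. -/
lemma nosal_key {n : ℕ} (G : SimpleGraph (Fin n)) [DecidableRel G.Adj] (h : G.CliqueFree 3)
    (lam : ℝ) (hlam : 0 ≤ lam) (y : Fin n → ℝ) (hy : ∀ v, 0 ≤ y v)
    (hev : ∀ v, lam * y v ≤ (adjMat G *ᵥ y) v)
    (u : Fin n) (hmax : ∀ v, y v ≤ y u) :
    lam ^ 2 * y u ≤ (G.edgeFinset.card : ℝ) * y u ∧
    (lam ^ 2 = (G.edgeFinset.card : ℝ) → 0 < y u →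
      ∀ e ∈ G.edgeFinset, ∃ v w, G.Adj u v ∧ G.Adj v w ∧ e = s(v, w) ∧ y w = y u) := by
  classical
  have htri : ∀ a b : Fin n, G.Adj a b → G.Adj u a → G.Adj u b → False := by
    intro a b hab hua hub
    exact h {u, a, b} (SimpleGraph.is3Clique_triple_iff.mpr ⟨hua, hub, hab⟩)
  set A := adjMat G with hA
  set P : Finset (Fin n × Fin n) :=
    Finset.univ.filter (fun p => G.Adj u p.1 ∧ G.Adj p.1 p.2) with hP
  have hsum : (A *ᵥ (A *ᵥ y)) u = ∑ p ∈ P, y p.2 := by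
    simp only [Matrix.mulVec, dotProduct, hA, adjMat, Matrix.of_apply, hP]
    rw [Finset.sum_filter, Fintype.sum_prod_type]
    refine Finset.sum_congr rfl fun v _ => ?_
    by_cases huv : G.Adj u v
    · simp only [huv, if_true, one_mul, Finset.mul_sum]
      refine Finset.sum_congr rfl fun w _ => ?_
      by_cases hvw : G.Adj v w <;> simp [hvw]
    · simp [huv]
  have hmaps : ∀ p ∈ P, s(p.1, p.2) ∈ G.edgeFinset := by
    intro p hp
    simp only [hP, Finset.mem_filter] at hp
    simpa [SimpleGraph.mem_edgeFinset] using hp.2.2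
  have hinj : Set.InjOn (fun p : Fin n × Fin n => s(p.1, p.2)) (P : Set (Fin n × Fin n)) := by
    intro p hp q hq hpq
    simp only [hP, Finset.mem_filter, Finset.coe_filter] at hp hq
    rcases Sym2.mk_eq_mk_iff.mp hpq with h1 | h1
    · exact h1
    · exfalso
      have h2 : p.2 = q.1 := by
        have := congrArg Prod.snd h1; simpa using this
      exact htri p.1 p.2 hp.2.2 hp.2.1 (by rw [h2]; exact hq.2.1)
  have hcard : P.card ≤ G.edgeFinset.card := by
    apply Finset.card_le_card_of_injOn (fun p : Fin n × Fin n => s(p.1, p.2)) hmaps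
    intro p hp q hq; exact hinj (by simpa using hp) (by simpa using hq)
  have hbound : ∑ p ∈ P, y p.2 ≤ (P.card : ℝ) * y u := by
    have := Finset.sum_le_card_nsmul P (fun p => y p.2) (y u) (fun p _ => hmax p.2)
    simpa [nsmul_eq_mul] using this
  have hchain : lam ^ 2 * y u ≤ (A *ᵥ (A *ᵥ y)) u := by
    have h1 : lam * (lam * y u) ≤ lam * (A *ᵥ y) u :=
      mul_le_mul_of_nonneg_left (hev u) hlam
    have h2 : lam * (A *ᵥ y) u ≤ (A *ᵥ (A *ᵥ y)) u := by
      calc lam * (A *ᵥ y) u = ∑ v, A u v * (lam * y v) := by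
            simp only [Matrix.mulVec, dotProduct, Finset.mul_sum]
            exact Finset.sum_congr rfl fun v _ => by ring
        _ ≤ ∑ v, A u v * (A *ᵥ y) v :=
            Finset.sum_le_sum fun v _ => mul_le_mul_of_nonneg_left (hev v) (adjMat_nonneg G u v)
        _ = (A *ᵥ (A *ᵥ y)) u := by simp [Matrix.mulVec, dotProduct]
    calc lam ^ 2 * y u = lam * (lam * y u) := by ring
      _ ≤ lam * (A *ᵥ y) u := h1
      _ ≤ (A *ᵥ (A *ᵥ y)) u := h2
  have hPm : ∑ p ∈ P, y p.2 ≤ (G.edgeFinset.card : ℝ) * y u :=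
    hbound.trans (by
      have : (P.card : ℝ) ≤ G.edgeFinset.card := by exact_mod_cast hcard
      exact mul_le_mul_of_nonneg_right this (hy u))
  refine ⟨by calc lam ^ 2 * y u ≤ (A *ᵥ (A *ᵥ y)) u := hchain
    _ = ∑ p ∈ P, y p.2 := hsum
    _ ≤ (G.edgeFinset.card : ℝ) * y u := hPm, ?_⟩
  intro heq hypos e he
  have hsum_eq : ∑ p ∈ P, y p.2 = (G.edgeFinset.card : ℝ) * y u := by
    have hlow : (G.edgeFinset.card : ℝ) * y u ≤ ∑ p ∈ P, y p.2 := by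
      rw [← heq]; exact hchain.trans_eq hsum
    exact le_antisymm hPm hlow
  have hcard_eq : P.card = G.edgeFinset.card := by
    have h1 : (G.edgeFinset.card : ℝ) * y u ≤ (P.card : ℝ) * y u := hsum_eq ▸ hbound
    have h2 : (G.edgeFinset.card : ℝ) ≤ P.card := le_of_mul_le_mul_right h1 hypos
    have h3 : G.edgeFinset.card ≤ P.card := by exact_mod_cast h2
    exact le_antisymm hcard h3
  have hterm : ∀ p ∈ P, y p.2 = y u := by
    by_contra hcon
    push_neg at hcon
    obtain ⟨p, hp, hne⟩ := hcon
    have hlt : ∑ q ∈ P, y q.2 < ∑ q ∈ P, y u :=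
      Finset.sum_lt_sum (fun q _ => hmax q.2) ⟨p, hp, lt_of_le_of_ne (hmax p.2) hne⟩
    rw [hsum_eq, Finset.sum_const, nsmul_eq_mul, hcard_eq] at hlt
    exact lt_irrefl _ hlt
  have hsurj : ∃ p ∈ P, s(p.1, p.2) = e := by
    have := Finset.surj_on_of_inj_on_of_card_le (s := P) (t := G.edgeFinset)
      (fun p _ => s(p.1, p.2)) (fun p hp => hmaps p hp)
      (fun p q hp hq hpq => hinj (by simpa using hp) (by simpa using hq) hpq)
      (le_of_eq hcard_eq.symm)
    obtain ⟨p, hp, hpe⟩ := this e he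
    exact ⟨p, hp, hpe.symm⟩
  obtain ⟨p, hp, hpe⟩ := hsurj
  have hp' := hp
  simp only [hP, Finset.mem_filter] at hp'
  exact ⟨p.1, p.2, hp'.2.1, hp'.2.2, hpe.symm, hterm p hp⟩

lemma specRad_attained {V : Type*} [Fintype V] [DecidableEq V] [Nonempty V] (G : SimpleGraph V) :
    ∃ i, (adjMat_isHermitian G).eigenvalues i = specRad G ∧
      ∀ j, (adjMat_isHermitian G).eigenvalues j ≤ specRad G := by
  obtain ⟨i, hi⟩ := Finite.exists_max (adjMat_isHermitian G).eigenvalues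
  have hle : ∀ j, (adjMat_isHermitian G).eigenvalues j ≤ specRad G := fun j =>
    le_ciSup (Set.Finite.bddAbove (Set.finite_range _)) j
  exact ⟨i, le_antisymm (hle i) (ciSup_le hi), hle⟩

lemma sum_eigenvalues_eq_zero {V : Type*} [Fintype V] [DecidableEq V] (G : SimpleGraph V) :
    ∑ i, (adjMat_isHermitian G).eigenvalues i = 0 := by
  have hA := adjMat_isHermitian G
  have htr : Matrix.trace (adjMat G) = 0 := by
    simp only [Matrix.trace, Matrix.diag, adjMat, Matrix.of_apply]
    exact Finset.sum_eq_zero fun v _ => by simp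
  have h2 : Matrix.trace (adjMat G) = ∑ i, hA.eigenvalues i := by
    rw [hA.trace_eq_sum_eigenvalues]
    simp
  rw [← h2, htr]

lemma specRad_nonneg {V : Type*} [Fintype V] [DecidableEq V] [Nonempty V] (G : SimpleGraph V) :
    0 ≤ specRad G := by
  obtain ⟨i, hi, hle⟩ := specRad_attained G
  by_contra hneg
  push_neg at hneg
  have : ∑ j, (adjMat_isHermitian G).eigenvalues j < 0 :=
    Finset.sum_neg (fun j _ => lt_of_le_of_lt (hle j) hneg) Finset.univ_nonempty
  rw [sum_eigenvalues_eq_zero] at this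
  exact lt_irrefl _ this

lemma eigenvalue_of_eigenvector {V : Type*} [Fintype V] [DecidableEq V] (G : SimpleGraph V)
    (μ : ℝ) (z : V → ℝ) (hz : z ≠ 0) (hzA : adjMat G *ᵥ z = μ • z) :
    ∃ i, (adjMat_isHermitian G).eigenvalues i = μ := by
  have hA := adjMat_isHermitian G
  have hmem : μ ∈ spectrum ℝ (adjMat G) := by
    rw [← Matrix.spectrum_toEuclideanLin (A := adjMat G)]
    set z' : EuclideanSpace ℝ V := (WithLp.equiv 2 (V → ℝ)).symm z with hz'
    have h1 : Matrix.toEuclideanLin (adjMat G) z' = μ • z' := by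
      rw [Matrix.toEuclideanLin_apply]
      simp only [hz']
      rw [show ((WithLp.equiv 2 (V → ℝ)).symm z).ofLp = z from rfl, hzA]
      rfl
    have h2 : Module.End.HasEigenvector (Matrix.toEuclideanLin (adjMat G)) μ z' :=
      ⟨Module.End.mem_eigenspace_iff.mpr h1, by simpa [hz'] using hz⟩
    exact (Module.End.hasEigenvalue_of_hasEigenvector h2).mem_spectrum
  rw [Matrix.IsHermitian.spectrum_real_eq_range_eigenvalues hA] at hmem
  obtain ⟨i, hi⟩ := hmem
  exact ⟨i, hi⟩

/-- Equality `λ(G) = √m` holds for a triangle-free graph with `m ≥ 1` edges iff `G` is a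
complete bipartite graph together with possibly some isolated vertices. -/
theorem nosal_equality {n : ℕ} (G : SimpleGraph (Fin n)) [DecidableRel G.Adj]
    (h : G.CliqueFree 3) (hm : 1 ≤ G.edgeFinset.card) :
    specRad G = Real.sqrt (G.edgeFinset.card) ↔
      ∃ s t : Finset (Fin n), s.Nonempty ∧ t.Nonempty ∧ Disjoint s t ∧
        ∀ u v : Fin n, G.Adj u v ↔ ((u ∈ s ∧ v ∈ t) ∨ (u ∈ t ∧ v ∈ s)) := by
  classical
  have hA := adjMat_isHermitian G
  obtain ⟨a0, b0, hab0⟩ : ∃ a b : Fin n, G.Adj a b := by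
    obtain ⟨e, he⟩ := Finset.card_pos.mp hm
    revert he
    refine Sym2.ind (fun a b he => ⟨a, b, ?_⟩) e
    simpa [SimpleGraph.mem_edgeFinset] using he
  haveI : Nonempty (Fin n) := ⟨a0⟩
  obtain ⟨i0, hi0, hle⟩ := specRad_attained G
  set lam := specRad G with hlamdef
  have hlam0 : 0 ≤ lam := specRad_nonneg G
  set x : Fin n → ℝ := ⇑(hA.eigenvectorBasis i0) with hxdef
  have hxev : adjMat G *ᵥ x = lam • x := by
    rw [hxdef, ← hi0]
    exact hA.mulVec_eigenvectorBasis i0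
  obtain ⟨v1, hv1⟩ : ∃ v, x v ≠ 0 := by
    by_contra hcon
    push_neg at hcon
    have hzero : hA.eigenvectorBasis i0 = 0 := by
      apply PiLp.ext
      intro v
      exact hcon v
    exact hA.eigenvectorBasis.orthonormal.ne_zero i0 hzero
  set y : Fin n → ℝ := fun v => |x v| with hydef
  obtain ⟨u, hu⟩ := Finite.exists_max y
  have hyu : 0 < y u := lt_of_lt_of_le (abs_pos.mpr hv1) (hu v1)
  have hynn : ∀ v, 0 ≤ y v := fun v => abs_nonneg _
  have hev : ∀ v, lam * y v ≤ (adjMat G *ᵥ y) v := by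
    intro v
    have h1 : lam * y v = |(adjMat G *ᵥ x) v| := by
      rw [hxev]
      simp only [Pi.smul_apply, smul_eq_mul, hydef, abs_mul, abs_of_nonneg hlam0]
    rw [h1]
    calc |(adjMat G *ᵥ x) v| = |∑ w, adjMat G v w * x w| := by
          simp [Matrix.mulVec, dotProduct]
      _ ≤ ∑ w, |adjMat G v w * x w| := Finset.abs_sum_le_sum_abs _ _
      _ = ∑ w, adjMat G v w * y w := by
          refine Finset.sum_congr rfl fun w _ => ?_
          rw [abs_mul, abs_of_nonneg (adjMat_nonneg G v w)]
      _ = (adjMat G *ᵥ y) v := by simp [Matrix.mulVec, dotProduct]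
  have hmR : (0:ℝ) ≤ (G.edgeFinset.card : ℝ) := by positivity
  constructor
  · -- equality implies complete bipartite structure
    intro heq
    have hsq : lam ^ 2 = (G.edgeFinset.card : ℝ) := by
      rw [heq]; exact Real.sq_sqrt hmR
    have hdec : ∀ u', (∀ v, y v ≤ y u') → ∀ e ∈ G.edgeFinset,
        ∃ v w, G.Adj u' v ∧ G.Adj v w ∧ e = s(v, w) ∧ y w = y u' := fun u' hm' =>
      (nosal_key G h lam hlam0 y hynn hev u' hm').2 hsq (lt_of_lt_of_le hyu (hm' u))
    have htri : ∀ z a b : Fin n, G.Adj a b → G.Adj z a → G.Adj z b → False := by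
      intro z a b hab hza hzb
      exact h {z, a, b} (SimpleGraph.is3Clique_triple_iff.mpr ⟨hza, hzb, hab⟩)
    have hsplit : ∀ a b : Fin n, G.Adj a b →
        ∃ v w, G.Adj u v ∧ G.Adj v w ∧ s(a, b) = s(v, w) ∧ y w = y u := fun a b hab =>
      hdec u hu s(a, b) (by simpa [SimpleGraph.mem_edgeFinset] using hab)
    set S : Finset (Fin n) :=
      Finset.univ.filter (fun w => ¬ G.Adj u w ∧ ∃ v, G.Adj v w) with hSdef
    set T : Finset (Fin n) := G.neighborFinset u with hTdef
    have hmemS : ∀ w : Fin n, w ∈ S ↔ (¬ G.Adj u w ∧ ∃ v, G.Adj v w) := by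
      intro w; simp [hSdef]
    have hmemT : ∀ v : Fin n, v ∈ T ↔ G.Adj u v := fun v => G.mem_neighborFinset u v
    -- every S vertex is a maximum of y
    have hSmax : ∀ w ∈ S, y w = y u := by
      intro w hw
      rw [hmemS] at hw
      obtain ⟨hnadj, v', hv'⟩ := hw
      obtain ⟨v₁, w₁, huv₁, hv₁w₁, hsym, hyw₁⟩ := hsplit v' w hv'
      rcases (Sym2.mk_eq_mk_iff (p := (v', w)) (q := (v₁, w₁))).mp hsym with h1 | h1
      · have hvb : w = w₁ := by simpa using congrArg Prod.snd h1
        exact hvb ▸ hyw₁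
      · exfalso
        have hwv₁ : w = v₁ := by simpa using congrArg Prod.snd h1
        exact hnadj (hwv₁ ▸ huv₁)
    -- completeness
    have hcomp : ∀ v : Fin n, G.Adj u v → ∀ w ∈ S, G.Adj w v := by
      intro v huv w hw
      have hwmax : ∀ z, y z ≤ y w := fun z => (hu z).trans_eq (hSmax w hw).symm
      obtain ⟨v₂, w₂, hwv₂, hv₂w₂, hsym, _⟩ :=
        hdec w hwmax s(u, v) (by simpa [SimpleGraph.mem_edgeFinset] using huv)
      rcases (Sym2.mk_eq_mk_iff (p := (u, v)) (q := (v₂, w₂))).mp hsym with h1 | h1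
      · -- u = v₂, v = w₂ : then Adj w u, contradiction with w ∈ S
        exfalso
        have huv₂ : u = v₂ := by simpa using congrArg Prod.fst h1
        have : G.Adj w u := huv₂ ▸ hwv₂
        exact ((hmemS w).mp hw).1 this.symm
      · have hvv₂ : v = v₂ := by simpa using congrArg Prod.snd h1
        exact hvv₂ ▸ hwv₂
    -- the S/T classification of edges
    have hclass : ∀ a b : Fin n, G.Adj a b → (a ∈ T ∧ b ∈ S) ∨ (a ∈ S ∧ b ∈ T) := by
      intro a b hab
      obtain ⟨v, w, huv, hvw, hsym, _⟩ := hsplit a b hab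
      have hvT : v ∈ T := (hmemT v).mpr huv
      have hwS : w ∈ S := by
        rw [hmemS]
        exact ⟨fun hadj => htri u v w hvw huv hadj, ⟨v, hvw⟩⟩
      rcases (Sym2.mk_eq_mk_iff (p := (a, b)) (q := (v, w))).mp hsym with h1 | h1
      · have ha : a = v := by simpa using congrArg Prod.fst h1
        have hb : b = w := by simpa using congrArg Prod.snd h1
        exact Or.inl ⟨ha ▸ hvT, hb ▸ hwS⟩
      · have ha : a = w := by simpa using congrArg Prod.fst h1
        have hb : b = v := by simpa using congrArg Prod.snd h1
        exact Or.inr ⟨ha ▸ hwS, hb ▸ hvT⟩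
    obtain ⟨v0, w0, hv0, _, _, _⟩ := hsplit a0 b0 hab0
    refine ⟨S, T, ⟨u, ?_⟩, ⟨v0, (hmemT v0).mpr hv0⟩, ?_, ?_⟩
    · rw [hmemS]
      exact ⟨fun hadj => G.irrefl hadj, ⟨v0, hv0.symm⟩⟩
    · rw [Finset.disjoint_left]
      intro a haS haT
      exact ((hmemS a).mp haS).1 ((hmemT a).mp haT)
    · intro a b
      constructor
      · intro hab
        rcases hclass a b hab with ⟨haT, hbS⟩ | ⟨haS, hbT⟩
        · exact Or.inr ⟨haT, hbS⟩
        · exact Or.inl ⟨haS, hbT⟩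
      · rintro (⟨haS, hbT⟩ | ⟨haT, hbS⟩)
        · exact hcomp b ((hmemT b).mp hbT) a haS
        · exact (hcomp a ((hmemT a).mp haT) b hbS).symm
  · -- complete bipartite implies equality
    rintro ⟨s, t, hs, ht, hdisj, hiff⟩
    have hst : ∀ a, a ∈ s → a ∉ t := fun a ha => Finset.disjoint_left.mp hdisj ha
    have hts : ∀ a, a ∈ t → a ∉ s := fun a hat has => hst a has hat
    have hsc : (0:ℝ) < s.card := by exact_mod_cast hs.card_pos
    have htc : (0:ℝ) < t.card := by exact_mod_cast ht.card_pos
    -- edge count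
    have hcount : G.edgeFinset.card = s.card * t.card := by
      have hbij : (s ×ˢ t).card = G.edgeFinset.card := by
        refine Finset.card_bij (fun p _ => s(p.1, p.2)) ?_ ?_ ?_
        · intro p hp
          rw [Finset.mem_product] at hp
          have : G.Adj p.1 p.2 := (hiff p.1 p.2).mpr (Or.inl hp)
          simpa [SimpleGraph.mem_edgeFinset] using this
        · intro p hp q hq hpq
          rw [Finset.mem_product] at hp hq
          rcases Sym2.mk_eq_mk_iff.mp hpq with h1 | h1
          · exact h1
          · exfalso
            have h2 : p.1 = q.2 := by simpa using congrArg Prod.fst h1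
            exact hst p.1 hp.1 (h2 ▸ hq.2)
        · intro e he
          revert he
          refine Sym2.ind (fun a b he => ?_) e
          have hab : G.Adj a b := by simpa [SimpleGraph.mem_edgeFinset] using he
          rcases (hiff a b).mp hab with ⟨ha, hb⟩ | ⟨ha, hb⟩
          · exact ⟨(a, b), Finset.mem_product.mpr ⟨ha, hb⟩, rfl⟩
          · exact ⟨(b, a), Finset.mem_product.mpr ⟨hb, ha⟩, Sym2.eq_swap⟩
      rw [← hbij, Finset.card_product]
    have hupper : lam ≤ Real.sqrt (G.edgeFinset.card) := by
      have h1 := (nosal_key G h lam hlam0 y hynn hev u hu).1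
      have h2 : lam ^ 2 ≤ (G.edgeFinset.card : ℝ) := le_of_mul_le_mul_right h1 hyu
      exact (Real.le_sqrt hlam0 hmR).mpr h2
    have hμ : Real.sqrt ((G.edgeFinset.card : ℝ)) =
        Real.sqrt s.card * Real.sqrt t.card := by
      rw [hcount]
      push_cast
      exact Real.sqrt_mul hsc.le _
    set z : Fin n → ℝ := fun v =>
      if v ∈ s then Real.sqrt t.card else if v ∈ t then Real.sqrt s.card else 0 with hzdef
    have hz0 : z ≠ 0 := by
      obtain ⟨a, ha⟩ := hs
      intro hzz
      have h0 : z a = 0 := congrFun hzz a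
      rw [hzdef] at h0
      simp only [ha, if_pos] at h0
      exact (ne_of_gt (Real.sqrt_pos.mpr htc)) h0
    have hAv : ∀ v, (adjMat G *ᵥ z) v =
        ∑ w ∈ Finset.univ.filter (fun w => G.Adj v w), z w := by
      intro v
      rw [Finset.sum_filter]
      simp only [Matrix.mulVec, dotProduct, adjMat, Matrix.of_apply, ite_mul, one_mul,
        zero_mul]
    have hzev : adjMat G *ᵥ z = Real.sqrt (G.edgeFinset.card) • z := by
      funext v
      rw [hAv, Pi.smul_apply, smul_eq_mul, hμ]
      by_cases hvs : v ∈ s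
      · have hfilter : Finset.univ.filter (fun w => G.Adj v w) = t := by
          ext w
          simp only [Finset.mem_filter, Finset.mem_univ, true_and]
          rw [hiff]
          constructor
          · rintro (⟨_, hwt⟩ | ⟨hvt, _⟩)
            · exact hwt
            · exact absurd hvt (hst v hvs)
          · intro hwt; exact Or.inl ⟨hvs, hwt⟩
        rw [hfilter]
        have hsum : ∑ w ∈ t, z w = (t.card : ℝ) * Real.sqrt s.card := by
          rw [Finset.sum_congr rfl (fun w hw => show z w = Real.sqrt s.card by
            rw [hzdef]
            simp only
            rw [if_neg (hts w hw), if_pos hw])]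
          rw [Finset.sum_const, nsmul_eq_mul]
        rw [hsum, hzdef]
        simp only
        rw [if_pos hvs]
        nlinarith [Real.mul_self_sqrt htc.le, Real.sqrt_nonneg (s.card : ℝ), Real.sqrt_nonneg (t.card : ℝ)]
      · by_cases hvt : v ∈ t
        · have hfilter : Finset.univ.filter (fun w => G.Adj v w) = s := by
            ext w
            simp only [Finset.mem_filter, Finset.mem_univ, true_and]
            rw [hiff]
            constructor
            · rintro (⟨hvs', _⟩ | ⟨_, hws⟩)
              · exact absurd hvs' hvs
              · exact hws
            · intro hws; exact Or.inr ⟨hvt, hws⟩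
          rw [hfilter]
          have hsum : ∑ w ∈ s, z w = (s.card : ℝ) * Real.sqrt t.card := by
            rw [Finset.sum_congr rfl (fun w hw => show z w = Real.sqrt t.card by
              rw [hzdef]
              simp only
              rw [if_pos hw])]
            rw [Finset.sum_const, nsmul_eq_mul]
          rw [hsum, hzdef]
          simp only
          rw [if_neg hvs, if_pos hvt]
          nlinarith [Real.mul_self_sqrt hsc.le, Real.sqrt_nonneg (s.card : ℝ), Real.sqrt_nonneg (t.card : ℝ)]
        · have hfilter : Finset.univ.filter (fun w => G.Adj v w) = ∅ := by
            ext w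
            simp only [Finset.mem_filter, Finset.mem_univ, true_and, Finset.notMem_empty,
              iff_false]
            intro hadj
            rcases (hiff v w).mp hadj with ⟨hvs', _⟩ | ⟨hvt', _⟩
            · exact hvs hvs'
            · exact hvt hvt'
          rw [hfilter, hzdef]
          simp only
          rw [if_neg hvs, if_neg hvt]
          simp
    obtain ⟨i, hi⟩ := eigenvalue_of_eigenvector G _ z hz0 hzev
    have hlower : Real.sqrt (G.edgeFinset.card) ≤ lam := hi ▸ hle i
    exact le_antisymm hupper hlower
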